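/- Let H be a real Hilbert space, r > 0, and let S be a finite nonempty subset of the sphere {x ∈ H : ‖x‖ = r}. For y ∈ H, let ι_S^*(y) := max_{x∈S} ⟨x, y⟩ be the support function of S and let Proj_S(y) := {x ∈ S : ‖y−x‖ = min_{x'∈S} ‖y−x'‖} be the set of closest points of S to y. Then the convex subdifferential of ι_S^* at y, i.e. the set {z ∈ H : ι_S^*(y') ≥ ι_S^*(y) + ⟨z, y'−y⟩ for all y' ∈ H}, equals the convex hull of Proj_S(y). -/

import Mathlib

open scoped Classical RealInnerProductSpace

noncomputable section

variable {H : Type*} [NormedAddCommGroup H] [InnerProductSpace ℝ H]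

/-- `dist(y,S) = min_{x∈S} ‖y−x‖` (as the infimum of a finite nonempty set of reals). -/
def distS (S : Finset H) (y : H) : ℝ :=
  sInf ((fun x => ‖y - x‖) '' ↑S)

/-- `Proj_S(y)`, the set of closest points of `S` to `y`. -/
def ProjS (S : Finset H) (y : H) : Finset H :=
  S.filter fun x => ‖y - x‖ = distS S y

/-- The support function `ι_S^*(y) = max_{x∈S} ⟪x, y⟫` of a finite nonempty set. -/
def suppFn (S : Finset H) (hS : S.Nonempty) (y : H) : ℝ :=
  S.sup' hS fun x => ⟪x, y⟫

lemma norm_le_iff_inner_aux {r : ℝ} {x x' y : H} (hx : ‖x‖ = r) (hx' : ‖x'‖ = r) :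
    ‖y - x‖ ≤ ‖y - x'‖ ↔ ⟪x', y⟫ ≤ ⟪x, y⟫ := by
  have h1 : ‖y - x‖ ^ 2 = ‖y‖ ^ 2 - 2 * ⟪x, y⟫ + r ^ 2 := by
    rw [norm_sub_sq_real, real_inner_comm, hx]
  have h2 : ‖y - x'‖ ^ 2 = ‖y‖ ^ 2 - 2 * ⟪x', y⟫ + r ^ 2 := by
    rw [norm_sub_sq_real, real_inner_comm, hx']
  constructor
  · intro h
    have := pow_le_pow_left₀ (norm_nonneg _) h 2
    nlinarith
  · intro h
    have hsq : ‖y - x‖ ^ 2 ≤ ‖y - x'‖ ^ 2 := by nlinarith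
    exact (pow_le_pow_iff_left₀ (norm_nonneg _) (norm_nonneg _) two_ne_zero).mp hsq

lemma mem_ProjS_iff {r : ℝ} (S : Finset H) (hS : S.Nonempty)
    (hnorm : ∀ x ∈ S, ‖x‖ = r) (y : H) (x : H) :
    x ∈ ProjS S y ↔ x ∈ S ∧ ⟪x, y⟫ = suppFn S hS y := by
  have hdist : distS S y = S.inf' hS fun x => ‖y - x‖ := by
    rw [distS, Finset.inf'_eq_csInf_image]
  constructor
  · rintro hx
    rw [ProjS, Finset.mem_filter] at hx
    obtain ⟨hxS, hxd⟩ := hx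
    refine ⟨hxS, le_antisymm (Finset.le_sup' (f := fun x => ⟪x, y⟫) hxS) ?_⟩
    rw [suppFn, Finset.sup'_le_iff]
    intro x' hx'S
    rw [← norm_le_iff_inner_aux (hnorm x hxS) (hnorm x' hx'S), hxd, hdist]
    exact Finset.inf'_le _ hx'S
  · rintro ⟨hxS, hxi⟩
    rw [ProjS, Finset.mem_filter]
    refine ⟨hxS, le_antisymm ?_ ?_⟩
    · rw [hdist, Finset.le_inf'_iff]
      intro x' hx'S
      rw [norm_le_iff_inner_aux (hnorm x hxS) (hnorm x' hx'S), hxi]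
      exact Finset.le_sup' (f := fun x => ⟪x, y⟫) hx'S
    · rw [hdist]; exact Finset.inf'_le _ hxS

/-- from the proof of Proposition C.3 of the paper. Let `H` be a real
Hilbert space and `S` a finite nonempty subset of the sphere of radius `r > 0` centered at
the origin. Then the convex subdifferential of the support function `ι_S^*` at `y` equals the
convex hull of the set `Proj_S(y)` of closest points of `S` to `y`. -/
theorem statement12 [CompleteSpace H] (r : ℝ) (hr : 0 < r)
    (S : Finset H) (hS : S.Nonempty) (hnorm : ∀ x ∈ S, ‖x‖ = r) (y : H) :
    {z : H | ∀ y' : H, suppFn S hS y' ≥ suppFn S hS y + ⟪z, y' - y⟫}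
      = convexHull ℝ ↑(ProjS S y) := by
  have hmem : ∀ x, x ∈ ProjS S y ↔ x ∈ S ∧ ⟪x, y⟫ = suppFn S hS y :=
    mem_ProjS_iff S hS hnorm y
  -- argmax nonempty
  obtain ⟨x₀, hx₀S, hx₀⟩ := Finset.exists_mem_eq_sup' hS (fun x => ⟪x, y⟫)
  have hM : (ProjS S y).Nonempty := ⟨x₀, (hmem x₀).mpr ⟨hx₀S, hx₀.symm⟩⟩
  apply Set.Subset.antisymm
  · -- hard direction
    intro z hz
    by_contra hznot
    have hconv : Convex ℝ (convexHull ℝ (↑(ProjS S y) : Set H)) := convex_convexHull ℝ _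
    have hcomp : IsCompact (convexHull ℝ (↑(ProjS S y) : Set H)) :=
      (Set.Finite.isCompact_convexHull (𝕜 := ℝ) (hs := Finset.finite_toSet _))
    obtain ⟨f, u, hfs, hfz⟩ :=
      geometric_hahn_banach_closed_point hconv hcomp.isClosed hznot
    obtain ⟨v, hv⟩ := (InnerProductSpace.toDual ℝ H).surjective f
    have hfa : ∀ a : H, f a = ⟪a, v⟫ := by
      intro a
      rw [← hv, InnerProductSpace.toDual_apply_apply, real_inner_comm]
    set M := ProjS S y with hMdef
    set c := M.sup' hM (fun x => ⟪x, v⟫) with hc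
    set B := S.sup' hS (fun x => ⟪x, v⟫) with hB
    have hcu : c < u := by
      rw [hc, Finset.sup'_lt_iff]
      intro x hxM
      have : f x < u := hfs x (subset_convexHull ℝ _ hxM)
      rwa [hfa x] at this
    have hzu : u < ⟪z, v⟫ := by rw [← hfa z]; exact hfz
    -- gap δ
    set δ := S.inf' hS (fun x => if ⟪x, y⟫ = suppFn S hS y then 1 else suppFn S hS y - ⟪x, y⟫)
      with hδ
    have hδpos : 0 < δ := by
      rw [hδ, Finset.lt_inf'_iff]
      intro x hxS
      by_cases h : ⟪x, y⟫ = suppFn S hS y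
      · simp [h]
      · simp only [h, if_false]
        have hle : ⟪x, y⟫ ≤ suppFn S hS y := Finset.le_sup' (f := fun x => ⟪x, y⟫) hxS
        cases lt_or_eq_of_le hle with
        | inl h' => linarith
        | inr h' => exact absurd h' h
    set t := δ / (|B - c| + 1) with ht
    have habs : (0:ℝ) < |B - c| + 1 := by positivity
    have htpos : 0 < t := div_pos hδpos habs
    have htBc : t * (B - c) ≤ δ := by
      calc t * (B - c) ≤ t * |B - c| := by
            apply mul_le_mul_of_nonneg_left (le_abs_self _) htpos.le
        _ ≤ t * (|B - c| + 1) := by nlinarith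
        _ = δ := by rw [ht]; field_simp
    have hbound : suppFn S hS (y + t • v) ≤ suppFn S hS y + t * c := by
      rw [suppFn, Finset.sup'_le_iff]
      intro x hxS
      have hsplit : ⟪x, y + t • v⟫ = ⟪x, y⟫ + t * ⟪x, v⟫ := by
        rw [inner_add_right, real_inner_smul_right]
      rw [hsplit]
      by_cases hxM : x ∈ M
      · have h1 : ⟪x, y⟫ = suppFn S hS y := ((hmem x).mp hxM).2
        have h2 : ⟪x, v⟫ ≤ c := Finset.le_sup' (f := fun x => ⟪x, v⟫) hxM
        nlinarith
      · have h1 : ⟪x, y⟫ ≤ suppFn S hS y - δ := by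
          have hne : ¬ ⟪x, y⟫ = suppFn S hS y := fun h => hxM ((hmem x).mpr ⟨hxS, h⟩)
          have : δ ≤ suppFn S hS y - ⟪x, y⟫ := by
            have := Finset.inf'_le (b := x)
              (fun x => if ⟪x, y⟫ = suppFn S hS y then 1 else suppFn S hS y - ⟪x, y⟫) hxS
            rw [← hδ] at this
            simpa [hne] using this
          linarith
        have h2 : ⟪x, v⟫ ≤ B := Finset.le_sup' (f := fun x => ⟪x, v⟫) hxS
        nlinarith
    have hsub := hz (y + t • v)
    have : suppFn S hS y + ⟪z, (y + t • v) - y⟫ = suppFn S hS y + t * ⟪z, v⟫ := by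
      rw [add_sub_cancel_left, real_inner_smul_right]
    rw [this] at hsub
    have hchain : suppFn S hS y + t * ⟪z, v⟫ ≤ suppFn S hS y + t * c :=
      le_trans hsub hbound
    have h9 : t * ⟪z, v⟫ ≤ t * c := by linarith
    have : ⟪z, v⟫ ≤ c := le_of_mul_le_mul_left h9 htpos
    linarith
  · -- easy direction
    apply convexHull_min
    · intro x hxM y'
      have hx := (hmem x).mp hxM
      have h1 : ⟪x, y'⟫ ≤ suppFn S hS y' := Finset.le_sup' (f := fun x => ⟪x, y'⟫) hx.1
      have h2 : ⟪x, y' - y⟫ = ⟪x, y'⟫ - ⟪x, y⟫ := inner_sub_right _ _ _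
      simp only [Set.mem_setOf_eq, ge_iff_le]
      rw [h2, hx.2]
      linarith
    · intro z₁ hz₁ z₂ hz₂ a b ha hb hab
      intro y'
      have h1 := hz₁ y'
      have h2 := hz₂ y'
      have : ⟪a • z₁ + b • z₂, y' - y⟫ = a * ⟪z₁, y' - y⟫ + b * ⟪z₂, y' - y⟫ := by
        rw [inner_add_left, real_inner_smul_left, real_inner_smul_left]
      rw [ge_iff_le] at h1 h2 ⊢
      rw [this]
      have e1 : a * suppFn S hS y + b * suppFn S hS y = suppFn S hS y := by
        rw [← add_mul, hab, one_mul]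
      have e2 : a * suppFn S hS y' + b * suppFn S hS y' = suppFn S hS y' := by
        rw [← add_mul, hab, one_mul]
      linarith [mul_le_mul_of_nonneg_left h1 ha, mul_le_mul_of_nonneg_left h2 hb]
end
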